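/- Let W be a finite group acting by automorphisms on a multiplicative abelian group T, and let Z be a W-stable subgroup of T such that there exist a finite W-set S and a W-equivariant group isomorphism from T/Z onto the permutation module S → ℂˣ. Let t₀ ∈ T satisfy (σ·t₀)·t₀⁻¹ ∈ Z for all σ ∈ W. Then there exists z₀ ∈ Z such that σ·(z₀·t₀) = z₀·t₀ for all σ ∈ W. (This is the cohomological content of Corollary 6.5 of the paper: an element t₀ ∈ T̂ with t₀^σ/t₀ ∈ Ẑ for all σ ∈ W_F can be modified by a central element z₀ ∈ Ẑ so that z₀t₀ is fixed by W_F.) -/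

import Mathlib

/-- **Cohomological content of Corollary 6.5 of the paper**: let a finite group
`W` act by automorphisms `φ` on a multiplicative abelian group `T`, and let
`Z ≤ T` be a `W`-stable subgroup such that there exist a finite `W`-set `S`
(action via `ρ : W →* Perm S`) and a `W`-equivariant group isomorphism `ψ` from
`T/Z` onto the permutation module `S → ℂˣ` (where `W` acts on `S → ℂˣ` by
`(σ · f) s = f ((ρ σ)⁻¹ s)`).  If `t₀ ∈ T` satisfies `(σ·t₀)·t₀⁻¹ ∈ Z` for all
`σ ∈ W`, then there exists `z₀ ∈ Z` with `σ·(z₀·t₀) = z₀·t₀` for all `σ ∈ W`. -/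
theorem exists_central_modification_fixed
    {W T : Type*} [Group W] [Finite W] [CommGroup T]
    (φ : W →* MulAut T) (Z : Subgroup T)
    (hZstable : ∀ (σ : W), ∀ z ∈ Z, φ σ z ∈ Z)
    (hperm : ∃ (S : Type) (_ : Fintype S) (ρ : W →* Equiv.Perm S)
        (ψ : (T ⧸ Z) ≃* (S → ℂˣ)),
        ∀ (σ : W) (t : T) (s : S),
          ψ (QuotientGroup.mk (φ σ t)) s = ψ (QuotientGroup.mk t) ((ρ σ)⁻¹ s))
    (t₀ : T) (ht₀ : ∀ σ : W, φ σ t₀ * t₀⁻¹ ∈ Z) :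
    ∃ z₀ ∈ Z, ∀ σ : W, φ σ (z₀ * t₀) = z₀ * t₀ := by
  obtain ⟨S, _, ρ, ψ, hψ⟩ := hperm
  have : Fintype W := Fintype.ofFinite W
  set n := Fintype.card W with hn
  have hnpos : 0 < n := Fintype.card_pos
  -- the class of t₀ is W-fixed
  have hmk : ∀ σ : W, (QuotientGroup.mk (φ σ t₀) : T ⧸ Z) = QuotientGroup.mk t₀ := by
    intro σ
    rw [QuotientGroup.eq]
    have := Z.inv_mem (ht₀ σ)
    simpa [mul_comm, mul_inv_rev] using this
  set f : S → ℂˣ := ψ (QuotientGroup.mk t₀) with hf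
  have hFf : ∀ (σ : W) (s : S), f ((ρ σ)⁻¹ s) = f s := by
    intro σ s
    rw [hf, ← hψ σ t₀ s, hmk σ]
  -- setoid of ρ-orbits
  let sd : Setoid S :=
    ⟨fun a b => ∃ σ : W, ρ σ a = b,
      fun a => ⟨1, by simp⟩,
      fun {a b} h => by
        obtain ⟨σ, hσ⟩ := h
        exact ⟨σ⁻¹, by rw [← hσ, map_inv]; simp⟩,
      fun {a b c} h h' => by
        obtain ⟨σ, hσ⟩ := h
        obtain ⟨τ, hτ⟩ := h'
        exact ⟨τ * σ, by rw [map_mul]; simp [Equiv.Perm.mul_apply, hσ, hτ]⟩⟩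
  have hfc : ∀ a b : S, sd.r a b → f a = f b := by
    intro a b h
    obtain ⟨σ, hσ⟩ := h
    have : f (ρ σ a) = f a := by
      have := hFf σ⁻¹ a
      rwa [map_inv, inv_inv] at this
    rw [hσ] at this
    exact this.symm
  let fbar : Quotient sd → ℂˣ := Quotient.lift f hfc
  have hroot : ∀ o : Quotient sd, ∃ u : ℂˣ, u ^ n = fbar o := by
    intro o
    obtain ⟨c, hc⟩ := IsAlgClosed.exists_pow_nat_eq (k := ℂ) ((fbar o : ℂ)) hnpos
    have hc0 : c ≠ 0 := by
      intro h
      rw [h, zero_pow hnpos.ne'] at hc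
      exact (fbar o).ne_zero hc.symm
    refine ⟨Units.mk0 c hc0, ?_⟩
    ext
    simpa using hc
  let h : S → ℂˣ := fun s => (hroot (Quotient.mk sd s)).choose
  have hh1 : ∀ s : S, (h s) ^ n = f s := by
    intro s
    have := (hroot (Quotient.mk sd s)).choose_spec
    exact this
  have hh2 : ∀ (σ : W) (s : S), h ((ρ σ)⁻¹ s) = h s := by
    intro σ s
    have : (Quotient.mk sd ((ρ σ)⁻¹ s)) = Quotient.mk sd s :=
      Quotient.sound ⟨σ, by simp⟩
    simp only [h, this]
  obtain ⟨g, hg⟩ := QuotientGroup.mk_surjective (ψ.symm h)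
  have hgh : ψ (QuotientGroup.mk g) = h := by rw [hg]; simp
  -- the class of g is W-fixed
  have hgfix : ∀ σ : W, (QuotientGroup.mk (φ σ g) : T ⧸ Z) = QuotientGroup.mk g := by
    intro σ
    apply ψ.injective
    funext s
    rw [hψ σ g s, hgh, hh2]
  -- g^n ≡ t₀ mod Z
  have hgn : (QuotientGroup.mk (g ^ n) : T ⧸ Z) = QuotientGroup.mk t₀ := by
    apply ψ.injective
    have : (QuotientGroup.mk (g ^ n) : T ⧸ Z) = (QuotientGroup.mk g) ^ n := by
      simp
    rw [this, map_pow, hgh, ← hf]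
    funext s
    simp [hh1 s]
  set G : T := ∏ τ : W, φ τ g with hG
  have hGfix : ∀ σ : W, φ σ G = G := by
    intro σ
    rw [hG, map_prod]
    calc ∏ τ : W, φ σ (φ τ g) = ∏ τ : W, φ (σ * τ) g := by
          refine Finset.prod_congr rfl fun τ _ => ?_
          rw [map_mul]; rfl
      _ = ∏ τ : W, φ τ g := Equiv.prod_comp (Equiv.mulLeft σ) (fun τ => φ τ g)
  have hGmk : (QuotientGroup.mk G : T ⧸ Z) = QuotientGroup.mk t₀ := by
    rw [hG]
    have : (QuotientGroup.mk (∏ τ : W, φ τ g) : T ⧸ Z)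
        = ∏ τ : W, (QuotientGroup.mk (φ τ g) : T ⧸ Z) := by
      simp [QuotientGroup.mk_prod]
    rw [this]
    have : ∀ τ : W, (QuotientGroup.mk (φ τ g) : T ⧸ Z) = QuotientGroup.mk g :=
      hgfix
    rw [Finset.prod_congr rfl fun τ _ => this τ, Finset.prod_const,
      Finset.card_univ, ← hn, ← QuotientGroup.mk_pow, hgn]
  refine ⟨G * t₀⁻¹, ?_, ?_⟩
  · rw [← QuotientGroup.eq_one_iff]
    have : (QuotientGroup.mk (G * t₀⁻¹) : T ⧸ Z)
        = QuotientGroup.mk G * (QuotientGroup.mk t₀)⁻¹ := by simp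
    rw [this, hGmk, mul_inv_cancel]
  · intro σ
    have : G * t₀⁻¹ * t₀ = G := by group
    rw [this, hGfix σ]
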